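/- For all real numbers R, c, ε, δ, τ, θ > 0, the function λ ↦ det M₀(λ), where M₀(λ) is the 5×5 matrix with rows (−λ, −1, 0, 0, 0), (−Rθ/τ², −λ, R/τ, 1, 0), (0, Rθ/τ, −λc, 0, 1), (0, 1, 0, −ελ/θ, 0), (0, 0, 1, 0, −δλ/θ²), has exactly five real zeros, namely 0, λ₋, −λ₋, λ₊, −λ₊ with 0 < λ₋ < λ₊; in particular all five zeros are pairwise distinct (simple). -/

import Mathlib

set_option maxHeartbeats 1000000

private lemma det_formula (R c ε δ τ θ lam : ℝ)
    (hτ : τ ≠ 0) (hθ : θ ≠ 0) (hε : ε ≠ 0) (hc : c ≠ 0) :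
    Matrix.det !![-lam, -1, 0, 0, 0;
                      -(R * θ) / τ ^ 2, -lam, R / τ, 1, 0;
                      0, R * θ / τ, -lam * c, 0, 1;
                      0, 1, 0, -(ε * lam) / θ, 0;
                      0, 0, 1, 0, -(δ * lam) / θ ^ 2]
    = -(ε/θ) * lam * ((c*δ/θ^2) * lam^4
        - ((c*δ/θ^2)*((R*θ/τ^2 + θ/ε) + R^2*θ/(τ^2*c)) + 1) * lam^2
        + (R*θ/τ^2 + θ/ε)) := by
  simp [Matrix.det_succ_row_zero, Fin.sum_univ_succ, Fin.succAbove]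
  field_simp
  ring

/-- The equilibrium characteristic determinant of Ruggeri's hyperbolic
Navier–Stokes system with heat conduction has exactly five real zeros
`0, ±λ₋, ±λ₊` with `0 < λ₋ < λ₊`; in particular all five are simple
(pairwise distinct). -/
theorem equilibrium_speeds_simple_heat
    (R c ε δ τ θ : ℝ) (hR : 0 < R) (hc : 0 < c) (hε : 0 < ε) (hδ : 0 < δ)
    (hτ : 0 < τ) (hθ : 0 < θ) :
    ∃ lm lp : ℝ, 0 < lm ∧ lm < lp ∧
      ∀ lam : ℝ,
        Matrix.det !![-lam, -1, 0, 0, 0;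
                      -(R * θ) / τ ^ 2, -lam, R / τ, 1, 0;
                      0, R * θ / τ, -lam * c, 0, 1;
                      0, 1, 0, -(ε * lam) / θ, 0;
                      0, 0, 1, 0, -(δ * lam) / θ ^ 2] = 0
          ↔ lam = 0 ∨ lam = lm ∨ lam = -lm ∨ lam = lp ∨ lam = -lp := by
  set ls : ℝ := R*θ/τ^2 + θ/ε with hls_def
  set L : ℝ := ls + R^2*θ/(τ^2*c) with hL_def
  set a : ℝ := c*δ/θ^2 with ha_def
  have ha : 0 < a := by positivity
  have hls : 0 < ls := by positivity
  have hlsL : ls < L := by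
    have : 0 < R^2*θ/(τ^2*c) := by positivity
    simp only [hL_def]; linarith
  set B : ℝ := a*L + 1 with hB_def
  have hB : 0 < B := by positivity
  set D : ℝ := B^2 - 4*a*ls with hD_def
  have hD : 0 < D := by
    have h1 : a*ls*(ls - L) < 0 :=
      mul_neg_of_pos_of_neg (by positivity) (by linarith)
    nlinarith [sq_nonneg (2*a*ls - B)]
  set sD : ℝ := Real.sqrt D with hsD_def
  have hsD : 0 < sD := Real.sqrt_pos.mpr hD
  have hsD2 : sD^2 = D := Real.sq_sqrt hD.le
  have hsDB : sD < B := by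
    nlinarith [Real.sqrt_nonneg D]
  set xm : ℝ := (B - sD)/(2*a) with hxm_def
  set xp : ℝ := (B + sD)/(2*a) with hxp_def
  have hxm : 0 < xm := div_pos (by linarith) (by linarith)
  have hxmp : xm < xp := by
    rw [hxm_def, hxp_def, div_lt_div_iff₀ (by linarith) (by linarith)]
    nlinarith
  have hxp : 0 < xp := lt_trans hxm hxmp
  have ha' : a ≠ 0 := ne_of_gt ha
  have hsum : xm + xp = B/a := by
    rw [hxm_def, hxp_def]; field_simp; ring
  have hprod : xm * xp = ls/a := by
    have h : (B - sD) * (B + sD) = 4*a*ls := by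
      linear_combination hD_def - hsD2
    rw [hxm_def, hxp_def, div_mul_div_comm, h]
    field_simp
    ring
  refine ⟨Real.sqrt xm, Real.sqrt xp, Real.sqrt_pos.mpr hxm,
    Real.sqrt_lt_sqrt hxm.le hxmp, fun lam => ?_⟩
  have hlm2 : (Real.sqrt xm)^2 = xm := Real.sq_sqrt hxm.le
  have hlp2 : (Real.sqrt xp)^2 = xp := Real.sq_sqrt hxp.le
  rw [det_formula R c ε δ τ θ lam hτ.ne' hθ.ne' hε.ne' hc.ne']
  have key : (c*δ/θ^2) * lam^4
        - ((c*δ/θ^2)*((R*θ/τ^2 + θ/ε) + R^2*θ/(τ^2*c)) + 1) * lam^2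
        + (R*θ/τ^2 + θ/ε)
      = a * ((lam^2 - xm) * (lam^2 - xp)) := by
    have h1 : a * ((lam^2 - xm) * (lam^2 - xp))
        = a * lam^4 - (a*(xm+xp)) * lam^2 + a*(xm*xp) := by ring
    rw [h1, hsum, hprod, mul_div_cancel₀ _ ha', mul_div_cancel₀ _ ha']
  rw [key]
  have hne : -(ε/θ) ≠ 0 := neg_ne_zero.mpr (div_pos hε hθ).ne'
  have hqm : lam^2 = xm ↔ lam = Real.sqrt xm ∨ lam = -Real.sqrt xm := by
    constructor
    · intro h
      exact sq_eq_sq_iff_eq_or_eq_neg.mp (h.trans hlm2.symm)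
    · rintro (h | h) <;> rw [h] <;> simpa using hlm2
  have hqp : lam^2 = xp ↔ lam = Real.sqrt xp ∨ lam = -Real.sqrt xp := by
    constructor
    · intro h
      exact sq_eq_sq_iff_eq_or_eq_neg.mp (h.trans hlp2.symm)
    · rintro (h | h) <;> rw [h] <;> simpa using hlp2
  simp only [mul_eq_zero, sub_eq_zero, hne, ha', false_or, hqm, hqp]
  tauto
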